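/- arXiv:2509.14614 — 12 statements merged into one kernel-verified Lean document; each statement's English description precedes it below -/
import Mathlib

section
/- Let α and β be ordinals with α ≤ β. Then there is an order embedding from the quotient of α.toType by ∼_ω into the quotient of β.toType by ∼_ω, where each quotient carries the induced linear order. In particular, the order type of the countable condensation is a weakly order-preserving (endomorphic) map on the class of ordinals. -/
/-- The countable condensation `x ∼_ω y ↔ Set.uIcc x y is countable` as a setoid. -/
def ccSetoid (L : Type*) [LinearOrder L] : Setoid L where
  r x y := (Set.uIcc x y).Countable
  iseqv := by
    refine ⟨fun x => by simp, fun {x y} h => by rwa [Set.uIcc_comm], ?_⟩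
    intro x y z h1 h2
    exact (h1.union h2).mono Set.uIcc_subset_uIcc_union_uIcc

/-- The induced linear order on the quotient `L/∼_ω`:
`⟦x⟧ ≤ ⟦y⟧` iff `x ∼_ω y` or `x < y`. -/
def ccLE (L : Type*) [LinearOrder L] (a b : Quotient (ccSetoid L)) : Prop :=
  ∃ x y : L, a = Quotient.mk (ccSetoid L) x ∧ b = Quotient.mk (ccSetoid L) y ∧
    ((Set.uIcc x y).Countable ∨ x < y)

private lemma cc_trans {L : Type*} [LinearOrder L] {x y z : L}
    (h1 : (Set.uIcc x y).Countable) (h2 : (Set.uIcc y z).Countable) :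
    (Set.uIcc x z).Countable :=
  (h1.union h2).mono Set.uIcc_subset_uIcc_union_uIcc

/-- Characterization of `ccLE` on representatives. -/
lemma ccLE_mk_iff {L : Type*} [LinearOrder L] {x y : L} :
    ccLE L (Quotient.mk (ccSetoid L) x) (Quotient.mk (ccSetoid L) y) ↔
      ((Set.uIcc x y).Countable ∨ x < y) := by
  constructor
  · rintro ⟨u, v, hu, hv, huv⟩
    have hxu : (Set.uIcc x u).Countable := Quotient.exact hu
    have hyv : (Set.uIcc y v).Countable := Quotient.exact hv
    by_contra hc
    push_neg at hc
    obtain ⟨hnc, hnlt⟩ := hc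
    have hyx : y ≤ x := hnlt
    rcases huv with hcuv | hltuv
    · exact hnc (cc_trans (cc_trans hxu hcuv) (by rwa [Set.uIcc_comm] at hyv))
    · rcases le_or_gt y u with hyu | huy
      · -- y ≤ u < v, so u ∈ uIcc y v, hence uIcc u v countable
        have : Set.uIcc u v ⊆ Set.uIcc y v := by
          rw [Set.uIcc_of_le hltuv.le, Set.uIcc_of_le (hyu.trans hltuv.le)]
          exact Set.Icc_subset_Icc hyu le_rfl
        exact hnc (cc_trans (cc_trans hxu (hyv.mono this)) (by rwa [Set.uIcc_comm] at hyv))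
      · -- u < y ≤ x, so y ∈ uIcc u x, hence uIcc x y ⊆ uIcc u x countable
        have : Set.uIcc x y ⊆ Set.uIcc u x := by
          rw [Set.uIcc_of_ge hyx, Set.uIcc_of_le (huy.le.trans hyx)]
          exact Set.Icc_subset_Icc huy.le le_rfl
        exact hnc ((Set.uIcc_comm x u ▸ hxu : (Set.uIcc u x).Countable).mono this)
  · intro hxy
    exact ⟨x, y, rfl, rfl, hxy⟩

/-- Image of an interval under an initial segment embedding. -/
lemma uIcc_image_initialSeg {L M : Type*} [LinearOrder L] [LinearOrder M]
    (f : L ≤i M) (x y : L) : Set.uIcc (f x) (f y) = f '' Set.uIcc x y := by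
  apply Set.Subset.antisymm
  · intro b hb
    wlog hxy : x ≤ y generalizing x y
    · rw [Set.uIcc_comm] at hb
      rw [Set.uIcc_comm]
      exact this y x hb (le_of_not_ge hxy)
    rw [Set.uIcc_of_le (f.monotone hxy)] at hb
    obtain ⟨c, rfl⟩ := f.mem_range_of_le hb.2
    refine ⟨c, ?_, rfl⟩
    rw [Set.uIcc_of_le hxy]
    exact ⟨f.le_iff_le.1 hb.1, f.le_iff_le.1 hb.2⟩
  · rintro _ ⟨c, hc, rfl⟩
    rcases le_total x y with hxy | hyx
    · rw [Set.uIcc_of_le hxy] at hc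
      rw [Set.uIcc_of_le (f.monotone hxy)]
      exact ⟨f.monotone hc.1, f.monotone hc.2⟩
    · rw [Set.uIcc_of_ge hyx] at hc
      rw [Set.uIcc_of_ge (f.monotone hyx)]
      exact ⟨f.monotone hc.1, f.monotone hc.2⟩

lemma countable_uIcc_initialSeg_iff {L M : Type*} [LinearOrder L] [LinearOrder M]
    (f : L ≤i M) (x y : L) :
    (Set.uIcc (f x) (f y)).Countable ↔ (Set.uIcc x y).Countable := by
  rw [uIcc_image_initialSeg]
  exact ⟨fun hc => Set.countable_of_injective_of_countable_image
    f.toRelEmbedding.injective.injOn hc, fun hc => hc.image f⟩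

/-- If `α ≤ β` are ordinals, then the quotient of `α.toType` by the
countable condensation order-embeds into the quotient of `β.toType` by the countable
condensation (each quotient carrying the induced linear order): the order type of the
countable condensation is weakly order-preserving on ordinals. -/
theorem countableCondensation_mono_on_ordinals (α β : Ordinal) (h : α ≤ β) :
    Nonempty (RelEmbedding (ccLE α.ToType) (ccLE β.ToType)) := by
  let f : α.ToType ≤i β.ToType := Ordinal.initialSegToType h
  refine ⟨⟨⟨Quotient.map f (fun x y hxy => ?_), ?_⟩, ?_⟩⟩
  · exact (countable_uIcc_initialSeg_iff f x y).2 hxy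
  · rintro ⟨x⟩ ⟨y⟩ hxy
    have : (Set.uIcc (f x) (f y)).Countable := Quotient.exact hxy
    exact Quotient.sound ((countable_uIcc_initialSeg_iff f x y).1 this)
  · rintro ⟨x⟩ ⟨y⟩
    show ccLE _ (Quotient.mk _ (f x)) (Quotient.mk _ (f y)) ↔
      ccLE _ (Quotient.mk _ x) (Quotient.mk _ y)
    rw [ccLE_mk_iff, ccLE_mk_iff, countable_uIcc_initialSeg_iff f x y, f.lt_iff_lt]
end

section
/- Let O₂ be the canonical linear order of order type the second uncountable ordinal ω₂ (e.g. (Cardinal.aleph 2).ord.toType). Then the quotient of O₂ by the countable condensation ∼_ω, with its induced linear order, is order-isomorphic to O₂ itself. -/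
/-- The canonical linear order of order type `ω₂`. -/
noncomputable abbrev Omega2 : Type := (Cardinal.aleph 2).ord.ToType

namespace CCAux

open Cardinal Ordinal Set

variable {L : Type*} [LinearOrder L]

lemma rel_symm {x y : L} (h : (Set.uIcc x y).Countable) : (Set.uIcc y x).Countable := by
  rwa [Set.uIcc_comm]

lemma rel_trans {x y z : L} (h1 : (Set.uIcc x y).Countable) (h2 : (Set.uIcc y z).Countable) :
    (Set.uIcc x z).Countable :=
  (h1.union h2).mono Set.uIcc_subset_uIcc_union_uIcc

lemma rel_refl (x : L) : (Set.uIcc x x).Countable := by simp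

lemma rel_of_mem {a b c : L} (h : (Set.uIcc a b).Countable) (hc : c ∈ Set.uIcc a b) :
    (Set.uIcc a c).Countable :=
  h.mono (Set.uIcc_subset_uIcc Set.left_mem_uIcc hc)

/-- The raw `≤` on representatives. -/
def P (x y : L) : Prop := (Set.uIcc x y).Countable ∨ x < y

lemma P_trans {x y z : L} (h1 : P x y) (h2 : P y z) : P x z := by
  rcases h1 with h1 | h1 <;> rcases h2 with h2 | h2
  · exact Or.inl (rel_trans h1 h2)
  · rcases lt_trichotomy x z with h | h | h
    · exact Or.inr h
    · exact Or.inl (h ▸ rel_refl x)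
    · -- z < x, y < z, x ∼ y : z ∈ uIcc x y since y < z < x
      exact Or.inl (rel_of_mem h1 (Set.mem_uIcc.mpr (Or.inr ⟨h2.le, h.le⟩)))
  · rcases lt_trichotomy x z with h | h | h
    · exact Or.inr h
    · exact Or.inl (h ▸ rel_refl x)
    · -- z < x, x < y, y ∼ z : x ∈ uIcc y z since z < x < y
      exact Or.inl (rel_symm (rel_of_mem (rel_symm h2) (Set.mem_uIcc.mpr (Or.inl ⟨h.le, h1.le⟩))))
  · exact Or.inr (h1.trans h2)

lemma P_wd {x y x' y' : L} (hx : (Set.uIcc x x').Countable) (hy : (Set.uIcc y y').Countable) :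
    P x y ↔ P x' y' :=
  ⟨fun h => P_trans (P_trans (Or.inl (rel_symm hx)) h) (Or.inl hy),
   fun h => P_trans (P_trans (Or.inl hx) h) (Or.inl (rel_symm hy))⟩

/-- The lifted `≤` on the quotient. -/
def qle (a b : Quotient (ccSetoid L)) : Prop :=
  Quotient.liftOn₂ a b P (fun _ _ _ _ h1 h2 => propext (P_wd h1 h2))

lemma mk_le_iff {x y : L} :
    (Quotient.mk (ccSetoid L) x ≤ Quotient.mk (ccSetoid L) y) ↔ P x y := by
  rw [Quotient.le_def]
  constructor
  · intro h
    induction h with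
    | single h =>
      rcases h with h | h
      · rcases h.lt_or_eq with h | h
        · exact Or.inr h
        · exact Or.inl (h ▸ rel_refl _)
      · exact Or.inl h
    | tail _ h ih =>
      refine P_trans ih ?_
      rcases h with h | h
      · rcases h.lt_or_eq with h | h
        · exact Or.inr h
        · exact Or.inl (h ▸ rel_refl _)
      · exact Or.inl h
  · rintro (h | h)
    · exact .single (.inr h)
    · exact .single (.inl h.le)

noncomputable instance : LinearOrder (Quotient (ccSetoid L)) where
  le := (· ≤ ·)
  lt := (· < ·)
  le_refl := le_refl
  le_trans _ _ _ := le_trans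
  le_antisymm a b := Quotient.inductionOn₂ a b fun x y h1 h2 => by
    rw [mk_le_iff] at h1 h2
    refine Quotient.sound ?_
    rcases h1 with h1 | h1
    · exact h1
    · rcases h2 with h2 | h2
      · exact rel_symm h2
      · exact absurd h2 (asymm h1)
  le_total a b := Quotient.inductionOn₂ a b fun x y => by
    rw [mk_le_iff, mk_le_iff]
    rcases lt_trichotomy x y with h | h | h
    · exact Or.inl (Or.inr h)
    · exact Or.inl (Or.inl (h ▸ rel_refl x))
    · exact Or.inr (Or.inr h)
  toDecidableLE := fun _ _ => Classical.dec _

lemma qle_mk {x y : L} :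
    (Quotient.mk (ccSetoid L) x ≤ Quotient.mk (ccSetoid L) y) ↔ P x y := mk_le_iff

lemma ccLE_iff (a b : Quotient (ccSetoid L)) : ccLE L a b ↔ a ≤ b := by
  constructor
  · rintro ⟨x, y, rfl, rfl, h⟩
    exact qle_mk.mpr h
  · exact Quotient.inductionOn₂ a b fun x y h => ⟨x, y, rfl, rfl, qle_mk.mp h⟩

variable [WellFoundedLT L]

/-- Least representative of a class. -/
noncomputable def rep (a : Quotient (ccSetoid L)) : L :=
  (IsWellFounded.wf (r := ((· < ·) : L → L → Prop))).min
    {x | Quotient.mk (ccSetoid L) x = a} ⟨a.out, a.out_eq⟩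

lemma rep_mk (a : Quotient (ccSetoid L)) : Quotient.mk (ccSetoid L) (rep a) = a := by
  have := (IsWellFounded.wf (r := ((· < ·) : L → L → Prop))).min_mem
    {x | Quotient.mk (ccSetoid L) x = a} ⟨a.out, a.out_eq⟩
  exact this

lemma rep_strictMono : StrictMono (rep (L := L)) := by
  intro a b hab
  have h1 : a ≤ b := hab.le
  have h2 : ¬ b ≤ a := not_le_of_gt hab
  rw [← rep_mk a, ← rep_mk b] at h1 h2
  rw [qle_mk] at h1 h2
  rcases h1 with h1 | h1
  · exact absurd (Or.inl (rel_symm h1)) h2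
  · exact h1

end CCAux

open Cardinal Ordinal Set CCAux

/-- The quotient of (the canonical linear order of order type) `ω₂` by
the countable condensation, with its induced linear order, is order-isomorphic to `ω₂`
itself. -/
theorem omega2_countableCondensation_iso_self :
    Nonempty (RelIso (ccLE Omega2) (fun a b : Omega2 => a ≤ b)) := by
  haveI : WellFoundedLT (Quotient (ccSetoid Omega2)) := rep_strictMono.wellFoundedLT
  haveI iwoQ : IsWellOrder (Quotient (ccSetoid Omega2)) (· < ·) := isWellOrder_lt
  haveI iwoL : IsWellOrder Omega2 (· < ·) := isWellOrder_lt
  -- the order embedding from least representatives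
  have htype_le : @type (Quotient (ccSetoid Omega2)) (· < ·) iwoQ ≤ @type Omega2 (· < ·) iwoL :=
    type_le_iff'.mpr ⟨⟨⟨rep, rep_strictMono.injective⟩, rep_strictMono.lt_iff_lt⟩⟩
  have hL : #Omega2 = Cardinal.aleph 2 := by rw [mk_toType, card_ord]
  -- every class has cardinality at most ℵ₁
  have fiber_card : ∀ x : Omega2,
      #{y : Omega2 // Quotient.mk (ccSetoid Omega2) y = Quotient.mk (ccSetoid Omega2) x}
      ≤ Cardinal.aleph 1 := by
    intro x
    have hCrel : ∀ y : Omega2, Quotient.mk (ccSetoid Omega2) y = Quotient.mk (ccSetoid Omega2) x →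
        (Set.uIcc y x).Countable := fun y hy => Quotient.exact hy
    set C : Set Omega2 :=
      {y | Quotient.mk (ccSetoid Omega2) y = Quotient.mk (ccSetoid Omega2) x} with hC
    set Cle : Set Omega2 := {y | y ∈ C ∧ y ≤ x} with hCle
    set Cgt : Set Omega2 := {y | y ∈ C ∧ x < y} with hCgt
    have hsub : C ⊆ Cle ∪ Cgt := by
      intro y hy
      rcases le_or_gt y x with h | h
      · exact Or.inl ⟨hy, h⟩
      · exact Or.inr ⟨hy, h⟩
    have hCleCount : Cle.Countable := by
      rcases Set.eq_empty_or_nonempty Cle with h | hne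
      · simp [h]
      · have hz₀mem := (IsWellFounded.wf (r := ((· < ·) : Omega2 → Omega2 → Prop))).min_mem Cle hne
        set z₀ := (IsWellFounded.wf (r := ((· < ·) : Omega2 → Omega2 → Prop))).min Cle hne with hz₀
        have hmin : ∀ y ∈ Cle, z₀ ≤ y := fun y hy =>
          not_lt.mp ((IsWellFounded.wf (r := ((· < ·) : Omega2 → Omega2 → Prop))).not_lt_min Cle hy)
        have hcount : (Set.uIcc z₀ x).Countable := hCrel z₀ hz₀mem.1
        refine hcount.mono ?_
        intro y hy
        exact Set.mem_uIcc.mpr (Or.inl ⟨hmin y hy, hy.2⟩)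
    have hCgtCard : #Cgt ≤ Cardinal.aleph 1 := by
      haveI : WellFoundedLT Cgt := (Subtype.strictMono_coe _).wellFoundedLT
      haveI iwoU : IsWellOrder Cgt (· < ·) := isWellOrder_lt
      have htypein : ∀ u : Cgt, @typein Cgt (· < ·) iwoU u < (Cardinal.aleph 1).ord := by
        intro u
        rw [Cardinal.lt_ord]; change #{z : Cgt // z < u} < Cardinal.aleph 1
        have hcu : (Set.uIcc x (u : Omega2)).Countable := rel_symm (hCrel _ u.2.1)
        haveI := hcu.to_subtype
        have hinj : Function.Injective
            (fun z : {z : Cgt // z < u} => (⟨(z.1 : Omega2), Set.mem_uIcc.mpr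
              (Or.inl ⟨z.1.2.2.le, (Subtype.coe_lt_coe.mpr z.2).le⟩)⟩ :
                (Set.uIcc x (u : Omega2)))) := by
          intro a b hab
          simpa [Subtype.ext_iff] using hab
        calc #{z : Cgt // z < u} ≤ #(Set.uIcc x (u : Omega2)) := Cardinal.mk_le_of_injective hinj
          _ ≤ ℵ₀ := Cardinal.mk_le_aleph0
          _ < Cardinal.aleph 1 := aleph0_lt_aleph_one
      have htype : @type Cgt (· < ·) iwoU ≤ (Cardinal.aleph 1).ord := by
        by_contra h
        push_neg at h
        obtain ⟨u, hu⟩ := @typein_surj Cgt (· < ·) iwoU _ h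
        exact absurd (hu ▸ htypein u) (lt_irrefl _)
      calc #Cgt = (@type Cgt (· < ·) iwoU).card := (card_type _).symm
        _ ≤ ((Cardinal.aleph 1).ord).card := Ordinal.card_le_card htype
        _ = Cardinal.aleph 1 := card_ord _
    have hCleCard : #Cle ≤ Cardinal.aleph 1 := by
      haveI := hCleCount.to_subtype
      exact le_trans Cardinal.mk_le_aleph0 (aleph0_le_aleph 1)
    calc #C ≤ #(Cle ∪ Cgt : Set Omega2) := Cardinal.mk_le_mk_of_subset hsub
      _ ≤ #Cle + #Cgt := Cardinal.mk_union_le _ _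
      _ ≤ Cardinal.aleph 1 + Cardinal.aleph 1 := add_le_add hCleCard hCgtCard
      _ = Cardinal.aleph 1 := Cardinal.add_eq_self (aleph0_le_aleph 1)
  -- hence #Q ≥ ℵ₂
  have hQcard : Cardinal.aleph 2 ≤ #(Quotient (ccSetoid Omega2)) := by
    have hsig : #Omega2 = Cardinal.sum
        (fun a : Quotient (ccSetoid Omega2) =>
          #{y : Omega2 // Quotient.mk (ccSetoid Omega2) y = a}) := by
      rw [← Cardinal.mk_sigma]
      exact (Cardinal.mk_congr (Equiv.sigmaFiberEquiv (Quotient.mk (ccSetoid Omega2)))).symm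
    have hsum_le : Cardinal.sum
        (fun a : Quotient (ccSetoid Omega2) =>
          #{y : Omega2 // Quotient.mk (ccSetoid Omega2) y = a})
        ≤ Cardinal.sum (fun _ : Quotient (ccSetoid Omega2) => Cardinal.aleph 1) := by
      refine Cardinal.sum_le_sum _ _ ?_
      intro a
      exact Quotient.inductionOn a fiber_card
    rw [Cardinal.sum_const'] at hsum_le
    have hmul : Cardinal.aleph 2 ≤ #(Quotient (ccSetoid Omega2)) * Cardinal.aleph 1 :=
      hL.symm.trans_le (hsig.trans_le hsum_le)
    have h2 := hmul.trans (Cardinal.mul_le_max _ _)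
    have h12 : Cardinal.aleph 1 < Cardinal.aleph 2 := aleph_lt_aleph.mpr one_lt_two
    have h02 : ℵ₀ < Cardinal.aleph 2 := aleph0_lt_aleph_one.trans h12
    rcases le_max_iff.mp h2 with h3 | h3
    · rcases le_max_iff.mp h3 with h4 | h4
      · exact h4
      · exact absurd h4 (not_le.mpr h12)
    · exact absurd h3 (not_le.mpr h02)
  -- conclude the order types are equal
  have htype_eq : @type (Quotient (ccSetoid Omega2)) (· < ·) iwoQ = @type Omega2 (· < ·) iwoL := by
    refine le_antisymm htype_le ?_
    have h1 : @type Omega2 (· < ·) iwoL = (Cardinal.aleph 2).ord := type_toType _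
    rw [h1, Cardinal.ord_le, card_type]
    exact hQcard
  obtain ⟨e⟩ := type_eq.mp htype_eq
  refine ⟨⟨e.toEquiv, ?_⟩⟩
  intro a b
  show e a ≤ e b ↔ ccLE Omega2 a b
  rw [ccLE_iff]
  constructor
  · intro h
    rw [← not_lt] at h ⊢
    exact fun hba => h (e.map_rel_iff.mpr hba)
  · intro h
    rw [← not_lt] at h ⊢
    exact fun hba => h (e.map_rel_iff.mp hba)
end

section
/- In the ω₁-lengthened rational line U, any two elements are equivalent under the countable condensation: for all x y : U, the interval Set.uIcc x y is countable. Hence U/∼_ω ≅ 1. -/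
/-- The canonical linear order of order type `ω₁`. -/
noncomputable abbrev Omega1 : Type := (Cardinal.aleph 1).ord.ToType

/-- `ω₁` consecutive blocks, each consisting of one point followed by a copy of `ℚ`. -/
noncomputable abbrev Dline : Type := Lex (Omega1 × (PUnit ⊕ₗ ℚ))

/-- The `ω₁`-lengthened rational line `U`. -/
noncomputable abbrev Uline : Type := (OrderDual Dline) ⊕ₗ (ℚ ⊕ₗ Dline)

lemma omega1_Iic_countable (γ : Omega1) : (Set.Iic γ).Countable := by
  have h := Cardinal.mk_Iio_ord_toType (c := Cardinal.aleph 1) γ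
  have h2 : (Set.Iio γ).Countable := (Cardinal.countable_iff_lt_aleph_one _).2 h
  rw [← Set.Iio_union_right]
  exact h2.union (Set.countable_singleton γ)

/-- The countable initial-segment slab of `Dline`. -/
def Sset (γ : Omega1) : Set Dline := {d | (ofLex d).1 ≤ γ}

lemma Sset_countable (γ : Omega1) : (Sset γ).Countable := by
  haveI : Countable (PUnit ⊕ₗ ℚ) := Countable.of_equiv _ (toLex : PUnit ⊕ ℚ ≃ _)
  have : Sset γ = ofLex ⁻¹' (Set.Iic γ ×ˢ Set.univ) := by
    ext d; simp [Sset, Set.mem_prod]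
  rw [this]
  exact ((omega1_Iic_countable γ).prod Set.countable_univ).preimage ofLex.injective

/-- A countable superset used to trap intervals. -/
def Cset (γ : Omega1) : Set Uline :=
  (fun d : Dline => (toLex (Sum.inl (OrderDual.toDual d)) : Uline)) '' Sset γ ∪
  Set.range (fun q : ℚ => (toLex (Sum.inr (toLex (Sum.inl q))) : Uline)) ∪
  (fun d : Dline => (toLex (Sum.inr (toLex (Sum.inr d))) : Uline)) '' Sset γ

lemma Cset_countable (γ : Omega1) : (Cset γ).Countable :=
  (((Sset_countable γ).image _).union (Set.countable_range _)).union
    ((Sset_countable γ).image _)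

lemma fst_mono {d d' : Dline} (h : d ≤ d') : (ofLex d).1 ≤ (ofLex d').1 :=
  ((Prod.Lex.le_iff (x := d) (y := d')).1 h).elim le_of_lt fun h => h.1.le

lemma Icc_subset_Cset (x y : Uline) (γ : Omega1)
    (hx : ∀ a : Dline, x = toLex (Sum.inl (OrderDual.toDual a)) → (ofLex a).1 ≤ γ)
    (hy : ∀ b : Dline, y = toLex (Sum.inr (toLex (Sum.inr b))) → (ofLex b).1 ≤ γ) :
    Set.Icc x y ⊆ Cset γ := by
  rintro z ⟨h1, h2⟩
  rcases z with (d | q | d)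
  · -- z = inl d, d : Dᵒᵈ
    rcases x with (a | q' | a)
    · have hda : a ≤ d := Sum.Lex.inl_le_inl_iff.1 h1
      have hda' : (OrderDual.ofDual d : Dline) ≤ OrderDual.ofDual a := hda
      have := hx (OrderDual.ofDual a) rfl
      exact Or.inl (Or.inl ⟨OrderDual.ofDual d, le_trans (fst_mono hda') this, rfl⟩)
    · exact absurd h1 (Sum.Lex.not_inr_le_inl)
    · exact absurd h1 (Sum.Lex.not_inr_le_inl)
  · exact Or.inl (Or.inr ⟨q, rfl⟩)
  · -- z = inr (inr d)
    rcases y with (b | q' | b)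
    · exact absurd h2 (Sum.Lex.not_inr_le_inl)
    · have h3 : (toLex (Sum.inr d) : ℚ ⊕ₗ Dline) ≤ toLex (Sum.inl q') :=
        Sum.Lex.inr_le_inr_iff.1 h2
      exact absurd h3 Sum.Lex.not_inr_le_inl
    · have hdb : (toLex (Sum.inr d) : ℚ ⊕ₗ Dline) ≤ toLex (Sum.inr b) :=
        Sum.Lex.inr_le_inr_iff.1 h2
      have hdb' : d ≤ b := Sum.Lex.inr_le_inr_iff.1 hdb
      exact Or.inr ⟨d, le_trans (fst_mono hdb') (hy b rfl), rfl⟩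

/-- In the `ω₁`-lengthened rational line `U`, any two elements are
equivalent under the countable condensation: every interval `Set.uIcc x y` is countable.
Hence `U/∼_ω ≅ 1`. -/
theorem Uline_condenses_to_one (x y : Uline) : (Set.uIcc x y).Countable := by
  haveI : Nonempty Omega1 := by
    rw [Ordinal.toType_nonempty_iff_ne_zero, Ne, Cardinal.ord_eq_zero]
    exact (Cardinal.aleph0_lt_aleph_one.trans_le' (Cardinal.aleph0_pos.le)).ne'
  classical
  set c : Uline → Omega1 := fun z =>
    match ofLex z with
    | Sum.inl d => (ofLex (OrderDual.ofDual d)).1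
    | Sum.inr w => match ofLex w with
      | Sum.inl _ => Classical.arbitrary Omega1
      | Sum.inr d => (ofLex d).1
    with hc
  set γ := max (c x) (c y) with hγ
  have key : ∀ u v : Uline, c u ≤ γ → c v ≤ γ → Set.Icc u v ⊆ Cset γ := by
    intro u v hu hv
    refine Icc_subset_Cset u v γ ?_ ?_
    · rintro a rfl; exact le_trans (le_of_eq rfl) hu
    · rintro b rfl; exact le_trans (le_of_eq rfl) hv
  have hmin : x ⊓ y = x ∨ x ⊓ y = y := by
    rcases le_total x y with h | h
    · exact Or.inl (inf_eq_left.2 h)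
    · exact Or.inr (inf_eq_right.2 h)
  have hmax : x ⊔ y = x ∨ x ⊔ y = y := by
    rcases le_total x y with h | h
    · exact Or.inr (sup_eq_right.2 h)
    · exact Or.inl (sup_eq_left.2 h)
  have hcmin : c (x ⊓ y) ≤ γ := by
    rcases hmin with h | h <;> rw [h] <;> [exact le_max_left _ _; exact le_max_right _ _]
  have hcmax : c (x ⊔ y) ≤ γ := by
    rcases hmax with h | h <;> rw [h] <;> [exact le_max_left _ _; exact le_max_right _ _]
  have h1 : Set.Icc (x ⊓ y) (x ⊔ y) ⊆ Cset γ := key _ _ hcmin hcmax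
  exact (Cset_countable γ).mono h1
end

section
/- If L is a nonempty linear order that condenses to 1 under the countable condensation, then L has a cofinal subset of cardinality at most ℵ₁ and a coinitial subset (cofinal in the dual order) of cardinality at most ℵ₁; that is, cf(L) ≤ ω₁ and cf*(L) ≤ ω₁. -/
open Cardinal Ordinal in
lemma cofinal_aux_of_condenses {L : Type*} [LinearOrder L] [Nonempty L]
    (h : ∀ x y : L, (Set.uIcc x y).Countable) :
    ∃ S : Set L, (∀ l : L, ∃ s ∈ S, l ≤ s) ∧ Cardinal.mk S ≤ Cardinal.aleph 1 := by
  classical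
  let r : L → L → Prop := WellOrderingRel
  haveI : IsWellOrder L r := WellOrderingRel.isWellOrder
  have wf : WellFounded r := IsWellFounded.wf
  set S : Set L := {y | ∀ w, r w y → ¬ y ≤ w} with hSdef
  -- S is cofinal
  have hcof : ∀ l : L, ∃ s ∈ S, l ≤ s := by
    intro l
    have hne : ({z : L | l ≤ z}).Nonempty := ⟨l, le_refl l⟩
    refine ⟨wf.min _ hne, ?_, wf.min_mem _ hne⟩
    intro w hw hle
    exact wf.not_lt_min _ (le_trans (wf.min_mem _ hne) hle) hw
  -- elements of S below y in L are r-below y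
  have hsub : ∀ a b : S, (a : L) < (b : L) → r (a : L) (b : L) := by
    intro a b hab
    rcases trichotomous_of r (a : L) (b : L) with hr | he | hr
    · exact hr
    · exact absurd he (ne_of_lt hab)
    · exact absurd hab.le (a.2 _ hr)
  have wfr : WellFounded (fun a b : S => r (a : L) (b : L)) :=
    InvImage.wf _ wf
  have wfS : WellFounded ((· < ·) : S → S → Prop) :=
    Subrelation.wf (fun {a b} hab => hsub a b hab) wfr
  haveI : WellFoundedLT S := ⟨wfS⟩
  haveI : IsWellOrder ↥S ((· < ·) : S → S → Prop) := inferInstance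
  have htype : Ordinal.type ((· < ·) : S → S → Prop) ≤ (Cardinal.aleph 1).ord := by
    by_contra hlt
    push_neg at hlt
    obtain ⟨y, hy⟩ := Ordinal.typein_surj ((· < ·) : S → S → Prop) hlt
    have hcard : Cardinal.mk {s : S // s < y} = Cardinal.aleph 1 := by
      have := Ordinal.card_typein (r := ((· < ·) : S → S → Prop)) y
      rw [← this, hy, Cardinal.card_ord]
    have hcount : Cardinal.mk {s : S // s < y} ≤ Cardinal.aleph0 := by
      rcases isEmpty_or_nonempty {s : S // s < y} with he | hne
      · exact Cardinal.mk_le_aleph0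
      · obtain ⟨⟨m0, hm0⟩⟩ := hne
        set T : Set S := {s : S | s < y} with hT
        have hTne : T.Nonempty := ⟨m0, hm0⟩
        set m : S := wfS.min T hTne with hm
        have hmle : ∀ s ∈ T, m ≤ s := fun s hs =>
          not_lt.mp (wfS.not_lt_min T hs)
        have hmem : ∀ s : {s : S // s < y}, (s : S) ∈ T := fun s => s.2
        have hcnt : ((Set.uIcc ((m : S) : L) ((y : S) : L))).Countable := h _ _
        have hmemI : ∀ s : {s : S // s < y},
            ((s : S) : L) ∈ Set.uIcc ((m : S) : L) ((y : S) : L) := by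
          intro s
          refine Set.mem_uIcc.mpr (Or.inl ⟨?_, ?_⟩)
          · exact_mod_cast hmle _ (hmem s)
          · exact le_of_lt (by exact_mod_cast s.2)
        refine le_trans (Cardinal.mk_le_of_injective
          (f := fun s : {s : S // s < y} =>
            (⟨((s : S) : L), hmemI s⟩ : (Set.uIcc ((m : S) : L) ((y : S) : L)))) ?_) ?_
        · intro a b hab
          simp only [Subtype.mk.injEq] at hab
          exact Subtype.ext (Subtype.ext hab)
        · haveI := hcnt.to_subtype
          exact Cardinal.mk_le_aleph0
    rw [hcard] at hcount
    exact absurd hcount (not_le.mpr Cardinal.aleph0_lt_aleph_one)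
  refine ⟨S, hcof, ?_⟩
  have := Ordinal.card_le_card htype
  rwa [Ordinal.card_type, Cardinal.card_ord] at this

/-- A nonempty linear order that condenses to `1` under the countable
condensation has a cofinal subset of cardinality at most `ℵ₁` and a coinitial subset of
cardinality at most `ℵ₁`; that is, `cf(L) ≤ ω₁` and `cf*(L) ≤ ω₁`. -/
theorem cofinality_le_aleph1_of_condenses_to_one
    {L : Type*} [LinearOrder L] [Nonempty L]
    (h : ∀ x y : L, (Set.uIcc x y).Countable) :
    (∃ S : Set L, (∀ l : L, ∃ s ∈ S, l ≤ s) ∧ Cardinal.mk S ≤ Cardinal.aleph 1) ∧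
      (∃ S : Set L, (∀ l : L, ∃ s ∈ S, s ≤ l) ∧ Cardinal.mk S ≤ Cardinal.aleph 1) := by
  have h' : ∀ x y : Lᵒᵈ, (Set.uIcc x y).Countable := by
    intro x y
    refine (h (OrderDual.ofDual x) (OrderDual.ofDual y)).mono ?_
    intro z hz
    refine Set.mem_uIcc.mpr ?_
    rcases Set.mem_uIcc.mp hz with ⟨a, b⟩ | ⟨a, b⟩
    · exact Or.inr ⟨b, a⟩
    · exact Or.inl ⟨b, a⟩
  refine ⟨cofinal_aux_of_condenses h, ?_⟩
  obtain ⟨S, hS, hcard⟩ := cofinal_aux_of_condenses (L := Lᵒᵈ) h'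
  exact ⟨S, hS, hcard⟩
end

section
/- If L is a linear order that condenses to 1 under the countable condensation, then the cardinality of L is at most ℵ₁. -/
open Cardinal Set

/-- A linear order in which every `Iic` is countable has cardinality at most `ℵ₁`. -/
lemma aux_card_le_aleph1 {M : Type*} [LinearOrder M]
    (h : ∀ y : M, (Set.Iic y).Countable) : Cardinal.mk M ≤ Cardinal.aleph 1 := by
  classical
  set r : M → M → Prop := WellOrderingRel with hr
  have hwo : IsWellOrder M r := WellOrderingRel.isWellOrder
  have wf : WellFounded r := hwo.wf
  set F : ∀ y : M, (∀ z, r z y → Prop) → Prop :=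
    fun y ih => ∀ z, ∀ hz : r z y, ih z hz → z < y with hF
  set C : M → Prop := wf.fix F with hC
  have C_iff : ∀ y, C y ↔ ∀ z, r z y → C z → z < y := by
    intro y
    have := wf.fix_eq F y
    rw [hC, this]
  have cofinal : ∀ x : M, ∃ y, C y ∧ x ≤ y := by
    intro x
    by_cases hx : C x
    · exact ⟨x, hx, le_rfl⟩
    · rw [C_iff] at hx
      push_neg at hx
      obtain ⟨z, hzr, hzC, hzlt⟩ := hx
      exact ⟨z, hzC, hzlt⟩
  have wf' : WellFounded ((· < ·) : {y // C y} → {y // C y} → Prop) := by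
    have : Subrelation ((· < ·) : {y // C y} → {y // C y} → Prop)
        (fun a b => r a.val b.val) := by
      intro a b hab
      rcases (haveI := hwo; trichotomous (r := r) a.val b.val) with h1 | h1 | h1
      · exact h1
      · exact absurd h1 (ne_of_lt hab)
      · exact absurd ((C_iff a.val).mp a.prop b.val h1 b.prop) (lt_asymm hab)
    exact this.wf (InvImage.wf Subtype.val wf)
  haveI : IsWellFounded {y // C y} (· < ·) := ⟨wf'⟩
  haveI : IsWellOrder {y // C y} (· < ·) := ⟨⟩
  have hCcard : Cardinal.mk {y // C y} ≤ Cardinal.aleph 1 := by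
    have htype : Ordinal.type ((· < ·) : {y // C y} → {y // C y} → Prop)
        ≤ (Cardinal.aleph 1).ord := by
      by_contra hlt
      push_neg at hlt
      obtain ⟨a, ha⟩ := Ordinal.typein_surj _ hlt
      have h1 : (Ordinal.typein ((· < ·) : {y // C y} → {y // C y} → Prop) a).card ≤ ℵ₀ := by
        change Cardinal.mk {b : {y // C y} // b < a} ≤ ℵ₀
        have inj : Function.Injective
            (fun b : {b : {y // C y} // b < a} => (⟨b.val.val, le_of_lt b.prop⟩ :
              Set.Iic (a.val : M))) := by
          intro b c hbc
          simp only [Subtype.mk.injEq] at hbc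
          exact Subtype.ext (Subtype.ext (Subtype.mk.inj hbc))
        haveI : Countable (Set.Iic (a.val : M)) := (h a.val).to_subtype
        exact (Cardinal.mk_le_of_injective inj).trans (Cardinal.mk_le_aleph0)
      rw [ha, Cardinal.card_ord] at h1
      exact absurd h1 (not_le.mpr (Cardinal.aleph0_lt_aleph_one))
    calc Cardinal.mk {y // C y}
        = (Ordinal.type ((· < ·) : {y // C y} → {y // C y} → Prop)).card :=
          (Ordinal.card_type _).symm
      _ ≤ ((Cardinal.aleph 1).ord).card := Ordinal.card_le_card htype
      _ = Cardinal.aleph 1 := Cardinal.card_ord _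
  have huniv : (⋃ c : {y // C y}, Set.Iic (c.val : M)) = Set.univ := by
    ext x
    simp only [Set.mem_iUnion, Set.mem_univ, iff_true]
    obtain ⟨y, hy, hxy⟩ := cofinal x
    exact ⟨⟨y, hy⟩, hxy⟩
  have hle := Cardinal.mk_iUnion_le_sum_mk (f := fun c : {y // C y} => Set.Iic (c.val : M))
  rw [huniv, Cardinal.mk_univ] at hle
  calc Cardinal.mk M ≤ Cardinal.sum (fun c : {y // C y} => Cardinal.mk (Set.Iic (c.val : M))) :=
        hle
    _ ≤ Cardinal.sum (fun _ : {y // C y} => ℵ₀) := by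
        apply Cardinal.sum_le_sum
        intro c
        haveI : Countable (Set.Iic (c.val : M)) := (h c.val).to_subtype
        exact Cardinal.mk_le_aleph0
    _ = Cardinal.mk {y // C y} * ℵ₀ := Cardinal.sum_const' _ _
    _ ≤ Cardinal.aleph 1 * ℵ₀ := mul_le_mul' hCcard le_rfl
    _ = Cardinal.aleph 1 := Cardinal.mul_eq_left (Cardinal.aleph0_le_aleph 1)
        ((Cardinal.aleph0_le_aleph 1)) Cardinal.aleph0_ne_zero

/-- If `L` condenses to `1` under the countable condensation, then
`|L| ≤ ℵ₁`. -/
theorem card_le_aleph1_of_condenses_to_one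
    {L : Type*} [LinearOrder L] (h : ∀ x y : L, (Set.uIcc x y).Countable) :
    Cardinal.mk L ≤ Cardinal.aleph 1 := by
  rcases isEmpty_or_nonempty L with hL | hL
  · simp [Cardinal.mk_eq_zero]
  obtain ⟨x₀⟩ := hL
  have hA : Cardinal.mk {y : L // x₀ ≤ y} ≤ Cardinal.aleph 1 := by
    apply aux_card_le_aleph1
    intro y
    have hicc : (Set.Icc x₀ (y : L)).Countable := by
      rw [← Set.uIcc_of_le y.prop]
      exact h x₀ y.val
    have : Set.Iic y = Subtype.val ⁻¹' Set.Icc x₀ (y : L) := by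
      ext z
      simp only [Set.mem_Iic, Set.mem_preimage, Set.mem_Icc]
      exact ⟨fun hz => ⟨z.prop, hz⟩, fun hz => hz.2⟩
    rw [this]
    exact hicc.preimage Subtype.val_injective
  have hB : Cardinal.mk {y : L // y ≤ x₀} ≤ Cardinal.aleph 1 := by
    have := aux_card_le_aleph1 (M := ({y : L // y ≤ x₀})ᵒᵈ) ?_
    · exact this
    intro y
    have hicc : (Set.Icc ((OrderDual.ofDual y : {y : L // y ≤ x₀}) : L) x₀).Countable := by
      rw [← Set.uIcc_of_le (OrderDual.ofDual y).prop, Set.uIcc_comm]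
      exact h x₀ _
    have : Set.Iic y = (fun z : ({y : L // y ≤ x₀})ᵒᵈ =>
        ((OrderDual.ofDual z : {y : L // y ≤ x₀}) : L)) ⁻¹'
        Set.Icc ((OrderDual.ofDual y : {y : L // y ≤ x₀}) : L) x₀ := by
      ext z
      simp only [Set.mem_Iic, Set.mem_preimage, Set.mem_Icc]
      constructor
      · intro hz
        exact ⟨hz, (OrderDual.ofDual z).prop⟩
      · intro hz
        exact hz.1
    rw [this]
    exact hicc.preimage (Subtype.val_injective.comp OrderDual.ofDual.injective)
  have huniv : ({y : L | x₀ ≤ y} ∪ {y : L | y ≤ x₀}) = Set.univ := by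
    ext z
    simp only [Set.mem_union, Set.mem_setOf_eq, Set.mem_univ, iff_true]
    exact le_total x₀ z
  have := Cardinal.mk_union_le {y : L | x₀ ≤ y} {y : L | y ≤ x₀}
  rw [huniv, Cardinal.mk_univ] at this
  calc Cardinal.mk L ≤ Cardinal.mk {y : L | x₀ ≤ y} + Cardinal.mk {y : L | y ≤ x₀} := this
    _ ≤ Cardinal.aleph 1 + Cardinal.aleph 1 := add_le_add hA hB
    _ = Cardinal.aleph 1 := Cardinal.add_eq_self (Cardinal.aleph0_le_aleph 1)
end

section
/- If L is an uncountable linear order that condenses to 1 under the countable condensation, then L has no countable cofinal subset or L has no countable coinitial subset; that is, cf(L) = ω₁ or cf*(L) = ω₁. -/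
/-- If `L` is an uncountable linear order that condenses to `1` under
the countable condensation, then `L` has no countable cofinal subset or `L` has no
countable coinitial subset; that is, `cf(L) = ω₁` or `cf*(L) = ω₁`. -/
theorem no_countable_cofinal_or_coinitial_of_uncountable_condenses_to_one
    {L : Type*} [LinearOrder L] [Uncountable L]
    (h : ∀ x y : L, (Set.uIcc x y).Countable) :
    (¬ ∃ S : Set L, S.Countable ∧ ∀ l : L, ∃ s ∈ S, l ≤ s) ∨
      (¬ ∃ S : Set L, S.Countable ∧ ∀ l : L, ∃ s ∈ S, s ≤ l) := by
  by_contra hc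
  push_neg at hc
  obtain ⟨⟨S, hS, hSc⟩, ⟨T, hT, hTc⟩⟩ := hc
  have : (Set.univ : Set L).Countable := by
    have : (Set.univ : Set L) ⊆ ⋃ s ∈ S, ⋃ t ∈ T, Set.uIcc t s := by
      intro l _
      obtain ⟨s, hs, hls⟩ := hSc l
      obtain ⟨t, ht, htl⟩ := hTc l
      refine Set.mem_biUnion hs (Set.mem_biUnion ht ?_)
      exact Set.mem_uIcc.2 (Or.inl ⟨htl, hls⟩)
    exact (hS.biUnion fun s _ => hT.biUnion fun t _ => h t s).mono this
  exact not_countable (α := L) (Set.countable_univ_iff.mp this)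
end

section
/- Suppose L is a linear order with a least element that condenses to 1 under the countable condensation and has no countable cofinal subset (i.e. cf(L) = ω₁). Then there exist a linear order L', an order embedding of L into L', such that: L' condenses to 1 under ∼_ω, L' has a least element, L' has no countable cofinal subset, and there is a strictly increasing function y : ω₁ → L' such that every z : L' satisfies y α ≤ z < y (Order.succ α) for some α in ω₁; in particular L' is the disjoint union of the intervals [y α, y (Order.succ α)). -/
noncomputable instance : SuccOrder Omega1 := SuccOrder.ofLinearWellFoundedLT Omega1

/-- An extension `L'` of a linear order `L` as in Proposition 3.10: `L'` condenses to `1`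
under the countable condensation, has a least element, has no countable cofinal subset,
and carries a strictly increasing cofinal sequence `y : ω₁ → L'` such that
`L' = ⋃ₐ [y α, y (succ α))`. -/
structure CondensationExtension (L : Type u) [LinearOrder L] : Type (u + 1) where
  /-- the underlying type of `L'` -/
  carrier : Type u
  /-- `L'` is a linear order -/
  [linearOrder : LinearOrder carrier]
  /-- `L` order-embeds into `L'` -/
  emb : L ↪o carrier
  /-- `L'` condenses to `1` under the countable condensation -/
  condensesToOne : ∀ x y : carrier, (Set.uIcc x y).Countable
  /-- `L'` has a least element -/
  exists_bot : ∃ b : carrier, ∀ z : carrier, b ≤ z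
  /-- `L'` has no countable cofinal subset -/
  no_countable_cofinal :
    ¬ ∃ S : Set carrier, S.Countable ∧ ∀ l : carrier, ∃ s ∈ S, l ≤ s
  /-- the sequence `y : ω₁ → L'` -/
  seq : Omega1 → carrier
  /-- `y` is strictly increasing -/
  seq_strictMono : StrictMono seq
  /-- every `z : L'` lies in `[y α, y (succ α))` for some `α < ω₁`, so `L'` is the
  disjoint union of these intervals -/
  seq_covers : ∀ z : carrier, ∃ α : Omega1, seq α ≤ z ∧ z < seq (Order.succ α)

noncomputable instance : NoMaxOrder Omega1 :=
  Cardinal.noMaxOrder (Cardinal.aleph0_le_aleph 1)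

lemma Omega1.countable_Iio (a : Omega1) : (Set.Iio a).Countable :=
  (Cardinal.countable_iff_lt_aleph_one _).2 (Cardinal.mk_Iio_ord_toType a)

lemma Omega1.countable_Iic (a : Omega1) : (Set.Iic a).Countable := by
  rw [← Set.Iio_union_right]
  exact (Omega1.countable_Iio a).union (Set.countable_singleton a)

lemma Omega1.not_countable : ¬ (Set.univ : Set Omega1).Countable := by
  rw [Cardinal.countable_iff_lt_aleph_one, Cardinal.mk_univ, Cardinal.mk_ord_toType]
  exact lt_irrefl _

lemma Omega1.bdd {S : Set Omega1} (hS : S.Countable) : ∃ b : Omega1, ∀ s ∈ S, s < b := by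
  by_contra h
  push_neg at h
  apply Omega1.not_countable
  refine Set.Countable.mono (fun x _ => ?_) (hS.biUnion fun s _ => Omega1.countable_Iic s)
  obtain ⟨s, hs, hxs⟩ := h x
  exact Set.mem_biUnion hs hxs

lemma Omega1.exists_isMin : ∃ α : Omega1, IsMin α := by
  have hne : Nonempty Omega1 := by
    by_contra h
    have := not_nonempty_iff.mp h
    exact Omega1.not_countable Set.countable_univ
  obtain ⟨a⟩ := hne
  obtain ⟨m, -, hm⟩ := (wellFounded_lt (α := Omega1)).has_min Set.univ ⟨a, trivial⟩
  exact ⟨m, fun b _ => le_of_not_gt (hm b trivial)⟩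

lemma Omega1.not_isSuccLimit_succ (α : Omega1) : ¬ Order.IsSuccLimit (Order.succ α) :=
  fun h => not_isMax α h.isMax

open scoped Classical

universe u
variable {L : Type u} [LinearOrder L]

lemma countable_setOf_lt (f : Omega1 → L) (α : Omega1) :
    {x | ∃ β, ∃ _ : β < α, x = f β}.Countable := by
  have := (Omega1.countable_Iio α).to_subtype
  refine Set.Countable.mono ?_ (Set.countable_range fun p : Set.Iio α => f p.1)
  rintro x ⟨β, hβ, rfl⟩
  exact ⟨⟨β, hβ⟩, rfl⟩

noncomputable def ySeq (b : L) (pick : Set L → L) : Omega1 → L :=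
  (wellFounded_lt (α := Omega1)).fix (C := fun _ => L) fun α ih =>
    if IsMin α then b else pick {x | ∃ β, ∃ h : β < α, x = ih β h}

theorem ySeq_eq (b : L) (pick : Set L → L) (α : Omega1) :
    ySeq b pick α =
      if IsMin α then b else pick {x | ∃ β, ∃ _ : β < α, x = ySeq b pick β} :=
  WellFounded.fix_eq _ _ α

theorem ySeq_min (b : L) (pick : Set L → L) {α : Omega1} (h : IsMin α) :
    ySeq b pick α = b := by
  rw [ySeq_eq, if_pos h]

theorem ySeq_strictMono (b : L) (pick : Set L → L)
    (hpick : ∀ S : Set L, S.Countable → ∀ s ∈ S, s < pick S) :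
    StrictMono (ySeq b pick) := by
  intro β α hβα
  have hnm : ¬ IsMin α := fun h => absurd hβα (by simpa using h hβα.le)
  rw [ySeq_eq b pick α, if_neg hnm]
  exact hpick _ (countable_setOf_lt _ α) _ ⟨β, hβα, rfl⟩

set_option maxHeartbeats 1000000 in
/-- If `L` is a linear order with a least element that condenses to `1`
under the countable condensation and has no countable cofinal subset (`cf(L) = ω₁`), then
`L` embeds into a linear order `L'` that condenses to `1`, has a least element, has no
countable cofinal subset, and is partitioned by the intervals `[y α, y (succ α))` of a
strictly increasing sequence `y : ω₁ → L'`. -/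
theorem exists_condensationExtension
    {L : Type u} [LinearOrder L]
    (hbot : ∃ b : L, ∀ z : L, b ≤ z)
    (hcond : ∀ x y : L, (Set.uIcc x y).Countable)
    (hcof : ¬ ∃ S : Set L, S.Countable ∧ ∀ l : L, ∃ s ∈ S, l ≤ s) :
    Nonempty (CondensationExtension L) := by
  classical
  obtain ⟨b, hb⟩ := hbot
  -- every countable set has a strict upper bound
  have hub : ∀ S : Set L, S.Countable → ∃ l : L, ∀ s ∈ S, s < l := by
    intro S hS
    by_contra h
    push_neg at h
    exact hcof ⟨S, hS, h⟩
  let pick : Set L → L := fun S =>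
    if h : S.Countable then Classical.choose (hub S h) else b
  have hpick : ∀ S : Set L, S.Countable → ∀ s ∈ S, s < pick S := by
    intro S hS s hs
    show s < if h : S.Countable then Classical.choose (hub S h) else b
    rw [dif_pos hS]
    exact Classical.choose_spec (hub S hS) s hs
  let y : Omega1 → L := ySeq b pick
  have hmono : StrictMono y := ySeq_strictMono b pick hpick
  have hIic_cnt : ∀ z : L, (Set.Iic z).Countable := by
    intro z
    refine Set.Countable.mono (fun x hx => ?_) (hcond b z)
    rw [Set.uIcc_of_le (hb z)]
    exact ⟨hb x, hx⟩
  -- y is unbounded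
  have hycof : ∀ z : L, ∃ α : Omega1, z < y α := by
    intro z
    by_contra h
    push_neg at h
    apply Omega1.not_countable
    apply Set.countable_of_injective_of_countable_image hmono.injective.injOn
    refine Set.Countable.mono ?_ (hIic_cnt z)
    rintro x ⟨α, -, rfl⟩
    exact h α
  -- the cut sets
  let c : Omega1 → Set L := fun α => {x | ∃ β, β < α ∧ x ≤ y β}
  have hc_cnt : ∀ α, (c α).Countable := by
    intro α
    refine Set.Countable.mono ?_
      ((Omega1.countable_Iio α).biUnion fun β _ => hIic_cnt (y β))
    rintro x ⟨β, hβ, hx⟩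
    exact Set.mem_biUnion hβ hx
  -- the carrier
  let T : Type u :=
    {S : Set L // (∃ z, S = Set.Iic z) ∨ ∃ α, Order.IsSuccLimit α ∧ S = c α}
  have hlowerT : ∀ U : T, IsLowerSet U.1 := by
    rintro ⟨U, ⟨z, rfl⟩ | ⟨α, hα, rfl⟩⟩
    · exact isLowerSet_Iic z
    · rintro v w hwv ⟨β, hβ, hv⟩
      exact ⟨β, hβ, hwv.trans hv⟩
  have hT_cnt : ∀ U : T, U.1.Countable := by
    rintro ⟨U, ⟨z, rfl⟩ | ⟨α, hα, rfl⟩⟩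
    · exact hIic_cnt z
    · exact hc_cnt α
  letI instT : LinearOrder T :=
    { (inferInstance : PartialOrder T) with
      le_total := fun U V => (hlowerT U).total (hlowerT V)
      toDecidableLE := Classical.decRel _ }
  have hleT : ∀ U V : T, U.1 ⊆ V.1 → U ≤ V := fun U V h => h
  have hleT' : ∀ U V : T, U ≤ V → U.1 ⊆ V.1 := fun U V h => h
  have hltT : ∀ U V : T, U.1 ⊆ V.1 → (∃ x ∈ V.1, x ∉ U.1) → U < V := by
    rintro U V hs ⟨x, hxV, hxU⟩
    refine lt_of_le_of_ne (hleT U V hs) fun he => hxU ?_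
    rw [he]; exact hxV
  let mkIic : L → T := fun z => ⟨Set.Iic z, Or.inl ⟨z, rfl⟩⟩
  have hbmem : ∀ U : T, b ∈ U.1 := by
    rintro ⟨U, ⟨z, rfl⟩ | ⟨α, hα, rfl⟩⟩
    · exact hb z
    · obtain ⟨β, hβ⟩ := not_isMin_iff.mp hα.not_isMin
      exact ⟨β, hβ, hb (y β)⟩
  -- the sequence in T
  let y' : Omega1 → T := fun α =>
    ⟨if Order.IsSuccLimit α then c α else Set.Iic (y α), by
      by_cases h : Order.IsSuccLimit α
      · rw [if_pos h]; exact Or.inr ⟨α, h, rfl⟩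
      · rw [if_neg h]; exact Or.inl ⟨_, rfl⟩⟩
  have hy'lim : ∀ α, Order.IsSuccLimit α → (y' α).1 = c α := by
    intro α h
    show (if Order.IsSuccLimit α then c α else Set.Iic (y α)) = c α
    rw [if_pos h]
  have hy'nlim : ∀ α, ¬ Order.IsSuccLimit α → (y' α).1 = Set.Iic (y α) := by
    intro α h
    show (if Order.IsSuccLimit α then c α else Set.Iic (y α)) = Set.Iic (y α)
    rw [if_neg h]
  have hy'sub : ∀ α, (y' α).1 ⊆ Set.Iic (y α) := by
    intro α
    by_cases h : Order.IsSuccLimit α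
    · rw [hy'lim α h]
      rintro x ⟨β, hβ, hx⟩
      exact hx.trans (hmono hβ).le
    · rw [hy'nlim α h]
  have hy'mem : ∀ α β : Omega1, β < α → y β ∈ (y' α).1 := by
    intro α β hβα
    by_cases h : Order.IsSuccLimit α
    · rw [hy'lim α h]; exact ⟨β, hβα, le_rfl⟩
    · rw [hy'nlim α h]; exact (hmono hβα).le
  have hy'mono : StrictMono y' := by
    intro α γ hαγ
    refine hltT _ _ ((hy'sub α).trans ((hlowerT (y' γ)).Iic_subset (hy'mem γ α hαγ))) ?_
    by_cases h : Order.IsSuccLimit α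
    · refine ⟨y α, hy'mem γ α hαγ, ?_⟩
      rw [hy'lim α h]
      rintro ⟨β, hβ, hle⟩
      exact absurd hle (not_le.mpr (hmono hβ))
    · refine ⟨y (Order.succ α), ?_, ?_⟩
      · rcases eq_or_lt_of_le (Order.succ_le_of_lt hαγ) with he | hlt
        · rw [← he, hy'nlim _ (Omega1.not_isSuccLimit_succ α)]
          exact le_rfl
        · exact hy'mem γ _ hlt
      · rw [hy'nlim α h]
        exact not_le.mpr (hmono (Order.lt_succ α))
  refine ⟨{ carrier := T
            emb := OrderEmbedding.ofMapLEIff mkIic fun a b => Set.Iic_subset_Iic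
            condensesToOne := ?_
            exists_bot := ⟨mkIic b, fun Z => hleT _ _ fun x hx =>
              le_antisymm (Set.mem_Iic.mp hx) (hb x) ▸ hbmem Z⟩
            no_countable_cofinal := ?_
            seq := y'
            seq_strictMono := hy'mono
            seq_covers := ?_ }⟩
  · -- condensesToOne
    intro U V
    have hD : ∀ W : T, {Z : T | Z.1 ⊆ W.1}.Countable := by
      intro W
      have hB : {β : Omega1 | y β ∈ W.1}.Countable := by
        apply Set.countable_of_injective_of_countable_image hmono.injective.injOn
        refine Set.Countable.mono ?_ (hT_cnt W)
        rintro x ⟨β, hβ, rfl⟩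
        exact hβ
      obtain ⟨δ, hδ⟩ := Omega1.bdd hB
      have hsub : {Z : T | Z.1 ⊆ W.1} ⊆
          (mkIic '' W.1) ∪ {Z : T | ∃ α ∈ Set.Iic δ, Z.1 = c α} := by
        rintro Z hZ
        rcases Z.2 with ⟨z, hz⟩ | ⟨α, hα, hz⟩
        · exact Or.inl ⟨z, hZ (by rw [hz]; exact Set.mem_Iic.mpr le_rfl),
            Subtype.ext hz.symm⟩
        · refine Or.inr ⟨α, ?_, hz⟩
          by_contra hcon
          rw [Set.mem_Iic, not_le] at hcon
          exact lt_irrefl δ (hδ δ (hZ (by rw [hz]; exact ⟨δ, hcon, le_rfl⟩)))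
      refine Set.Countable.mono hsub (Set.Countable.union ((hT_cnt W).image _) ?_)
      apply Set.countable_of_injective_of_countable_image Subtype.val_injective.injOn
      refine Set.Countable.mono ?_ ((Omega1.countable_Iic δ).image c)
      rintro x ⟨Z, ⟨α, hα, hz⟩, rfl⟩
      exact ⟨α, hα, hz.symm⟩
    have huicc : Set.uIcc U V ⊆ {Z : T | Z.1 ⊆ U.1} ∪ {Z : T | Z.1 ⊆ V.1} := by
      intro Z hZ
      rcases Set.mem_uIcc.mp hZ with ⟨-, h2⟩ | ⟨-, h2⟩
      · exact Or.inr (hleT' _ _ h2)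
      · exact Or.inl (hleT' _ _ h2)
    exact Set.Countable.mono huicc ((hD U).union (hD V))
  · -- no_countable_cofinal
    rintro ⟨S, hScnt, hScof⟩
    have hUcnt : (⋃ Z ∈ S, (Z : T).1).Countable := hScnt.biUnion fun Z _ => hT_cnt Z
    have hnc : ¬ ∀ l : L, ∃ s ∈ ⋃ Z ∈ S, (Z : T).1, l ≤ s :=
      fun h => hcof ⟨_, hUcnt, h⟩
    push_neg at hnc
    obtain ⟨l, hl⟩ := hnc
    obtain ⟨Z, hZS, hZl⟩ := hScof (mkIic l)
    have hmem : l ∈ ⋃ Z ∈ S, (Z : T).1 :=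
      Set.mem_biUnion hZS (hleT' _ _ hZl (Set.mem_Iic.mpr le_rfl))
    exact lt_irrefl l (hl l hmem)
  · -- seq_covers
    intro z'
    rcases z'.2 with ⟨z, hz⟩ | ⟨γ, hγ, hz⟩
    · obtain ⟨α₀, hα₀P, hα₀min⟩ := (wellFounded_lt (α := Omega1)).has_min
        {α | z < y α} (hycof z)
      have hα₀P : z < y α₀ := hα₀P
      have hmin : ∀ β, β < α₀ → y β ≤ z := fun β hβ =>
        le_of_not_gt fun hc => hα₀min β hc hβ
      have hα₀nm : ¬ IsMin α₀ := by
        intro h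
        rw [show y α₀ = b from ySeq_min b pick h] at hα₀P
        exact absurd (hb z) (not_le.mpr hα₀P)
      by_cases hlim : Order.IsSuccLimit α₀
      · refine ⟨α₀, hleT _ _ ?_, hltT _ _ ?_ ?_⟩
        · rw [hy'lim α₀ hlim, hz]
          rintro x ⟨β, hβ, hx⟩
          exact hx.trans (hmin β hβ)
        · rw [hz, hy'nlim _ (Omega1.not_isSuccLimit_succ α₀)]
          exact Set.Iic_subset_Iic.mpr (hα₀P.trans (hmono (Order.lt_succ α₀))).le
        · rw [hz, hy'nlim _ (Omega1.not_isSuccLimit_succ α₀)]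
          exact ⟨y (Order.succ α₀), Set.mem_Iic.mpr le_rfl,
            not_le.mpr (hα₀P.trans (hmono (Order.lt_succ α₀)))⟩
      · have hnp : ¬ Order.IsSuccPrelimit α₀ := fun hp => hlim ⟨hα₀nm, hp⟩
        obtain ⟨α, -, hsucc⟩ := Order.not_isSuccPrelimit_iff_succ_eq.mp hnp
        have hαz : y α ≤ z := hmin α (hsucc ▸ Order.lt_succ α)
        refine ⟨α, hleT _ _ ?_, hltT _ _ ?_ ?_⟩
        · rw [hz]
          exact (hy'sub α).trans (Set.Iic_subset_Iic.mpr hαz)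
        · rw [hz, hsucc, hy'nlim _ hlim]
          exact Set.Iic_subset_Iic.mpr hα₀P.le
        · rw [hz, hsucc, hy'nlim _ hlim]
          exact ⟨y α₀, Set.mem_Iic.mpr le_rfl, not_le.mpr hα₀P⟩
    · refine ⟨γ, hleT _ _ ?_, hltT _ _ ?_ ?_⟩
      · rw [hy'lim γ hγ, hz]
      · rw [hz, hy'nlim _ (Omega1.not_isSuccLimit_succ γ)]
        rintro x ⟨β, hβ, hx⟩
        exact hx.trans (hmono (hβ.trans (Order.lt_succ γ))).le
      · rw [hz, hy'nlim _ (Omega1.not_isSuccLimit_succ γ)]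
        refine ⟨y (Order.succ γ), Set.mem_Iic.mpr le_rfl, ?_⟩
        rintro ⟨β, hβ, hle⟩
        exact absurd hle (not_le.mpr (hmono (hβ.trans (Order.lt_succ γ))))
end

section
/- Suppose L is a linear order with a least element that condenses to 1 under the countable condensation, has no countable cofinal subset, and admits a strictly increasing cofinal function x : ω₁ → L such that every l : L satisfies x α ≤ l < x (Order.succ α) for some α in ω₁. Then there is an order embedding of L into the ω₁-lengthened rational line U. -/
/-- Suppose `L` is a linear order with a least element that condenses
to `1` under the countable condensation, has no countable cofinal subset, and admits a
strictly increasing cofinal sequence `x : ω₁ → L` such that every `l : L` satisfies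
`x α ≤ l < x (succ α)` for some `α < ω₁`. Then `L` order-embeds into the
`ω₁`-lengthened rational line `U`. -/
theorem embeds_into_Uline_of_partitioned
    {L : Type*} [LinearOrder L]
    (hbot : ∃ b : L, ∀ z : L, b ≤ z)
    (hcond : ∀ x y : L, (Set.uIcc x y).Countable)
    (hcof : ¬ ∃ S : Set L, S.Countable ∧ ∀ l : L, ∃ s ∈ S, l ≤ s)
    (x : Omega1 → L) (hx : StrictMono x)
    (hcover : ∀ l : L, ∃ α : Omega1, x α ≤ l ∧ l < x (Order.succ α)) :
    Nonempty (L ↪o Uline) := by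
  classical
  -- the block index function
  set a : L → Omega1 := fun l => (hcover l).choose with ha
  have ha1 : ∀ l, x (a l) ≤ l := fun l => (hcover l).choose_spec.1
  have ha2 : ∀ l, l < x (Order.succ (a l)) := fun l => (hcover l).choose_spec.2
  have hamono : ∀ {l l' : L}, l ≤ l' → a l ≤ a l' := by
    intro l l' hll
    by_contra h
    push_neg at h
    have h1 : Order.succ (a l') ≤ a l := Order.succ_le_of_lt h
    have : l' < l := lt_of_lt_of_le (ha2 l') (le_trans (hx.monotone h1) (ha1 l))
    exact absurd hll (not_le.mpr this)
  -- embed each block's strict part into ℚ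
  have hblock : ∀ α : Omega1, Nonempty ({l : L | x α < l ∧ l < x (Order.succ α)} ↪o ℚ) := by
    intro α
    have hc : ({l : L | x α < l ∧ l < x (Order.succ α)}).Countable := by
      refine (hcond (x α) (x (Order.succ α))).mono ?_
      intro l hl
      exact Set.mem_uIcc.mpr (Or.inl ⟨hl.1.le, hl.2.le⟩)
    have := hc.to_subtype
    exact Order.embedding_from_countable_to_dense _ _
  have e : ∀ α : Omega1, ({l : L | x α < l ∧ l < x (Order.succ α)} ↪o ℚ) := fun α => (hblock α).some
  set e' : Omega1 → L → ℚ := fun α l =>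
    if h : x α < l ∧ l < x (Order.succ α) then e α ⟨l, h⟩ else 0 with he'
  have he'mono : ∀ (α : Omega1) {l l' : L}, x α < l → x α < l' → l' < x (Order.succ α) →
      l < l' → e' α l < e' α l' := by
    intro α l l' h1 h2 h2' hll
    rw [he']
    dsimp only
    rw [dif_pos ⟨h1, hll.trans h2'⟩, dif_pos ⟨h2, h2'⟩]
    exact (e α).strictMono hll
  -- the map into Dline
  set g : L → Dline := fun l =>
    toLex (a l, if x (a l) < l then toLex (Sum.inr (e' (a l) l)) else toLex (Sum.inl PUnit.unit)) with hg
  have hgmono : StrictMono g := by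
    intro l l' hll
    rw [hg]
    dsimp only
    rcases lt_or_eq_of_le (hamono hll.le) with hα | hα
    · exact Prod.Lex.lt_iff.mpr (Or.inl hα)
    · refine Prod.Lex.lt_iff.mpr (Or.inr ⟨hα, ?_⟩)
      dsimp only [ofLex_toLex]
      by_cases h1 : x (a l) < l
      · have h2 : x (a l') < l' := lt_of_lt_of_le (hα ▸ h1) hll.le
        rw [if_pos h1, if_pos h2, ← hα]
        exact Sum.Lex.toLex_lt_toLex.mpr (Sum.lex_inr_inr.mpr
          (he'mono (a l) h1 (hα ▸ h2) (hα ▸ ha2 l') hll))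
      · by_cases h2 : x (a l') < l'
        · rw [if_neg h1, if_pos h2]
          exact Sum.Lex.toLex_lt_toLex.mpr (Sum.Lex.sep _ _)
        · exfalso
          have e1 : x (a l) = l := le_antisymm (ha1 l) (not_lt.mp h1)
          have e2 : x (a l') = l' := le_antisymm (ha1 l') (not_lt.mp h2)
          rw [← e1, ← e2, hα] at hll
          exact lt_irrefl _ hll
  refine ⟨OrderEmbedding.ofStrictMono (fun l => toLex (Sum.inr (toLex (Sum.inr (g l))))) ?_⟩
  intro l l' hll
  exact Sum.Lex.toLex_lt_toLex.mpr (Sum.lex_inr_inr.mpr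
    (Sum.Lex.toLex_lt_toLex.mpr (Sum.lex_inr_inr.mpr (hgmono hll))))
end

section
/- Let L be a linear order with a least element that condenses to 1 under the countable condensation and has no countable cofinal subset (i.e. cf(L) = ω₁). Then there is an order embedding of L into the ω₁-lengthened rational line U. -/
/-- Let `L` be a linear order with a least element that condenses to
`1` under the countable condensation and has no countable cofinal subset
(`cf(L) = ω₁`). Then `L` order-embeds into the `ω₁`-lengthened rational line `U`. -/
theorem embeds_into_Uline_of_bot_of_condenses_to_one
    {L : Type*} [LinearOrder L]
    (hbot : ∃ b : L, ∀ z : L, b ≤ z)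
    (hcond : ∀ x y : L, (Set.uIcc x y).Countable)
    (hcof : ¬ ∃ S : Set L, S.Countable ∧ ∀ l : L, ∃ s ∈ S, l ≤ s) :
    Nonempty (L ↪o Uline) := by
  classical
  obtain ⟨b, hb⟩ := hbot
  -- every countable set has a strict upper bound
  have hub : ∀ S : Set L, S.Countable → ∃ x : L, ∀ s ∈ S, s < x := by
    intro S hS
    by_contra h
    push_neg at h
    exact hcof ⟨S, hS, fun l => by
      obtain ⟨s, hs, hls⟩ := h l
      exact ⟨s, hs, hls⟩⟩
  -- every lower set `Iic x` is countable
  have hIic : ∀ x : L, (Set.Iic x).Countable := by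
    intro x
    refine (hcond b x).mono fun y hy => ?_
    rw [Set.mem_uIcc]
    exact Or.inl ⟨hb y, hy⟩
  -- initial segments of `ω₁` are countable
  have hIio : ∀ α : Omega1, (Set.Iio α).Countable := fun α =>
    (Cardinal.countable_iff_lt_aleph_one _).2 (Cardinal.mk_Iio_ord_toType α)
  have hrange : ∀ (α : Omega1) (IH : ∀ β : Omega1, β < α → L),
      (Set.range fun β : Set.Iio α => IH β.1 β.2).Countable := by
    intro α IH
    haveI := (hIio α).to_subtype
    exact Set.countable_range _
  -- construct a strictly increasing `ω₁`-sequence by transfinite recursion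
  set F : ∀ α : Omega1, (∀ β : Omega1, β < α → L) → L :=
    fun α IH => Classical.choose (hub _ (hrange α IH)) with hF
  set f : Omega1 → L := IsWellFounded.fix (· < ·) F with hfdef
  have hfspec : ∀ α β : Omega1, β < α → f β < f α := by
    intro α β hβ
    have h1 : f α = F α fun y _ => f y := IsWellFounded.fix_eq _ F α
    have h2 := Classical.choose_spec (hub _ (hrange α fun y _ => f y))
    rw [h1]
    exact h2 (f β) ⟨⟨β, hβ⟩, rfl⟩
  have hfmono : StrictMono f := fun β α h => hfspec α β h
  -- the range of `f` is uncountable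
  have hf_unc : ¬ (Set.range f).Countable := by
    intro h
    have hcnt : (Set.univ : Set Omega1).Countable := by
      have := h.preimage hfmono.injective
      simpa using this
    haveI : Countable Omega1 := Set.countable_univ_iff.1 hcnt
    have h1 : Cardinal.mk Omega1 ≤ Cardinal.aleph0 := Cardinal.mk_le_aleph0
    rw [Cardinal.mk_toType, Cardinal.card_ord] at h1
    exact absurd h1 (not_le.2 Cardinal.aleph0_lt_aleph_one)
  -- the range of `f` is strictly cofinal
  have hcov : ∀ l : L, ∃ α : Omega1, l < f α := by
    intro l
    by_contra h
    push_neg at h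
    exact hf_unc ((hIic l).mono (Set.range_subset_iff.2 h))
  -- place each point of `L` in its block
  set g : L → Omega1 := fun l =>
    WellFounded.min wellFounded_lt {α : Omega1 | l < f α} (hcov l) with hgdef
  have hg1 : ∀ l : L, l < f (g l) := fun l =>
    WellFounded.min_mem wellFounded_lt {α : Omega1 | l < f α} (hcov l)
  have hg2 : ∀ (l : L) (α : Omega1), l < f α → g l ≤ α := fun l α h =>
    not_lt.1 (WellFounded.not_lt_min wellFounded_lt {α : Omega1 | l < f α} h)
  have hgmono : Monotone g := fun l l' h =>
    hg2 l (g l') (lt_of_le_of_lt h (hg1 l'))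
  -- each block is countable
  have hfib : ∀ β : Omega1, ({x : L | g x = β}).Countable := by
    intro β
    refine (hIic (f β)).mono fun x hx => ?_
    have := hg1 x
    rw [Set.mem_setOf_eq] at hx
    rw [hx] at this
    exact le_of_lt this
  -- each block embeds into ℚ
  have hemb : ∀ β : Omega1, Nonempty ({x : L | g x = β} ↪o ℚ) := by
    intro β
    haveI := (hfib β).to_subtype
    exact Order.embedding_from_countable_to_dense _ _
  set e : ∀ β : Omega1, {x : L | g x = β} ↪o ℚ := fun β => (hemb β).some with he
  -- the embedding into `Dline`
  set F2 : L → Dline := fun l => toLex (g l, toLex (Sum.inr (e (g l) ⟨l, rfl⟩))) with hF2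
  have hkey : ∀ (β : Omega1) (x : L) (hx : g x = β),
      F2 x = toLex (β, toLex (Sum.inr (e β ⟨x, hx⟩))) := by
    rintro β x rfl
    rfl
  have hF2mono : StrictMono F2 := by
    intro l l' hll'
    have hg : g l ≤ g l' := hgmono hll'.le
    rcases eq_or_lt_of_le hg with heq | hlt
    · rw [hkey (g l) l rfl, hkey (g l) l' heq.symm]
      refine Prod.Lex.lt_iff.2 (Or.inr ⟨rfl, ?_⟩)
      exact Sum.Lex.inr_lt_inr_iff.2 ((e (g l)).lt_iff_lt.2 (Subtype.mk_lt_mk.2 hll'))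
    · rw [hkey (g l) l rfl, hkey (g l') l' rfl]
      exact Prod.Lex.lt_iff.2 (Or.inl hlt)
  -- embed `Dline` into `Uline`
  have hF3mono : StrictMono (fun d : Dline => (toLex (Sum.inr (toLex (Sum.inr d))) : Uline)) := by
    intro d d' h
    exact Sum.Lex.inr_lt_inr_iff.2 (Sum.Lex.inr_lt_inr_iff.2 h)
  exact ⟨OrderEmbedding.ofStrictMono _ (hF3mono.comp hF2mono)⟩
end

section
/- Let L be a nonempty linear order that condenses to 1 under the countable condensation. Then L has no countable cofinal subset (i.e. cf(L) = ω₁) if and only if every nonempty upward-closed subset of L (every nonempty tail/final segment) is uncountable. -/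
/-- Let `L` be a nonempty linear order that condenses to `1` under the
countable condensation. Then `L` has no countable cofinal subset (`cf(L) = ω₁`) iff every
nonempty upward-closed subset (tail) of `L` is uncountable. -/
theorem no_countable_cofinal_iff_no_countable_tail
    {L : Type*} [LinearOrder L] [Nonempty L]
    (h : ∀ x y : L, (Set.uIcc x y).Countable) :
    (¬ ∃ S : Set L, S.Countable ∧ ∀ l : L, ∃ s ∈ S, l ≤ s) ↔
      ∀ T : Set L, T.Nonempty → (∀ a ∈ T, ∀ b : L, a ≤ b → b ∈ T) → ¬ T.Countable := by
  constructor
  · rintro hno T ⟨a, ha⟩ hT hc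
    exact hno ⟨T, hc, fun l => (le_total l a).elim (fun h' => ⟨a, ha, h'⟩)
      (fun h' => ⟨l, hT a ha l h', le_rfl⟩)⟩
  · rintro hT ⟨S, hSc, hScof⟩
    obtain ⟨l0⟩ := ‹Nonempty L›
    obtain ⟨s0, hs0, -⟩ := hScof l0
    set T := {x | ∃ s ∈ S, s ≤ x} with hTdef
    have hsub : T ⊆ ⋃ s ∈ S, ⋃ t ∈ S, Set.uIcc s t := by
      rintro x ⟨s, hs, hsx⟩
      obtain ⟨t, ht, hxt⟩ := hScof x
      exact Set.mem_biUnion hs (Set.mem_biUnion ht (Set.mem_uIcc.2 (Or.inl ⟨hsx, hxt⟩)))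
    have hTc : T.Countable :=
      ((hSc.biUnion fun s _ => hSc.biUnion fun t _ => h s t).mono hsub)
    exact hT T ⟨s0, s0, hs0, le_rfl⟩
      (fun a ⟨s, hs, hsa⟩ b hab => ⟨s, hs, hsa.trans hab⟩) hTc
end

section
/- If L is an uncountable linear order that admits an order embedding into the ω₁-lengthened rational line U, then L contains a strictly monotone sequence of length ω₁: there exists a function f : ω₁ → L that is strictly increasing (StrictMono) or strictly decreasing (StrictAnti). -/
instance : Countable (PUnit.{1} ⊕ₗ ℚ) := inferInstanceAs (Countable (PUnit ⊕ ℚ))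

private lemma countable_Iio_of_lt_omega1' {o : Ordinal} (h : o < (Cardinal.aleph 1).ord) :
    (Set.Iio o).Countable := by
  rw [← Cardinal.le_aleph0_iff_set_countable, Ordinal.mk_Iio_ordinal, Cardinal.lift_le_aleph0]
  have h1 : o.card < Cardinal.aleph 1 := (Cardinal.lt_ord).1 h
  have h2 : (Cardinal.aleph 1) = Order.succ Cardinal.aleph0 := Cardinal.succ_aleph0.symm
  rw [h2] at h1
  exact Order.lt_succ_iff.mp h1

private lemma nonempty_Omega1 : Nonempty Omega1 := by
  rw [Ordinal.toType_nonempty_iff_ne_zero, ne_eq, Cardinal.ord_eq_zero]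
  intro h
  exact absurd (h ▸ Cardinal.aleph0_lt_aleph_one) (by simp)

/-- Core lemma: if `C ⊆ L` is uncountable, `b` assigns to each point a "block" in `Omega1`
with countable fibers on `C`, and `b` reflects order on `C`, then `L` contains a strictly
increasing `ω₁`-sequence. -/
private lemma core_lemma {L : Type*} [LinearOrder L] (C : Set L) (hC : ¬ C.Countable)
    (b : L → Omega1)
    (hfib : ∀ β : Omega1, {x | x ∈ C ∧ b x = β}.Countable)
    (hmono : ∀ x ∈ C, ∀ y ∈ C, b x < b y → x < y) :
    ∃ g : Omega1 → L, StrictMono g := by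
  classical
  set o1 : Ordinal := (Cardinal.aleph 1).ord with ho1
  set j : Set.Iio o1 ≃o Omega1 := Ordinal.ToType.mk with hj
  -- the set of blocks met by `C` is uncountable
  have hS₀ : ¬ (b '' C).Countable := by
    intro h
    apply hC
    have hsub : C ⊆ ⋃ β ∈ b '' C, {x | x ∈ C ∧ b x = β} := fun x hx =>
      Set.mem_biUnion ⟨x, hx, rfl⟩ ⟨hx, rfl⟩
    exact Set.Countable.mono hsub (h.biUnion fun β _ => hfib β)
  -- transfer to a set of ordinals below ω₁
  set i : Omega1 → Ordinal := fun β => ((j.symm β : Set.Iio o1) : Ordinal) with hi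
  have hi_inj : Function.Injective i := fun a b hab =>
    j.symm.injective (Subtype.ext hab)
  have hi_lt : ∀ β, i β < o1 := fun β => (j.symm β).2
  have hi_mono : StrictMono i := fun a b hab =>
    Subtype.coe_lt_coe.2 (j.symm.lt_iff_lt.mpr hab)
  set S : Set Ordinal := i '' (b '' C) with hS_def
  have hS : ¬ S.Countable := by
    intro h
    apply hS₀
    exact Set.Countable.mono (Set.subset_preimage_image i _) (h.preimage hi_inj)
  set S' : Set Ordinal := S ∪ Set.Ici o1 with hS'_def
  have hS' : ¬ BddAbove S' := by
    rintro ⟨x, hx⟩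
    have hmem : Order.succ (max x o1) ∈ S' := Or.inr (Set.mem_Ici.mpr
      (le_trans (le_max_right _ _) (Order.le_succ _)))
    have := hx hmem
    exact absurd ((le_max_left x o1).trans_lt (Order.lt_succ _)) (not_lt.mpr this)
  -- the enumeration of S' stays below ω₁ on inputs below ω₁
  have hlt : ∀ a : Omega1, Ordinal.enumOrd S' (i a) < o1 := by
    intro a
    by_contra h
    push_neg at h
    apply hS
    have hsub : S ⊆ Ordinal.enumOrd S' '' (Set.Iio (i a)) := by
      intro s hs
      have hs' : s ∈ S' := Or.inl hs
      have hslt : s < o1 := by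
        obtain ⟨β, _, rfl⟩ := hs
        exact hi_lt β
      rw [← Ordinal.range_enumOrd hS'] at hs'
      obtain ⟨t, rfl⟩ := hs'
      refine ⟨t, ?_, rfl⟩
      have : Ordinal.enumOrd S' t < Ordinal.enumOrd S' (i a) := hslt.trans_le h
      exact (Ordinal.enumOrd_strictMono hS').lt_iff_lt.mp this
    exact Set.Countable.mono hsub ((countable_Iio_of_lt_omega1' (hi_lt a)).image _)
  -- choose representatives
  have hmem : ∀ a : Omega1, ∃ x, x ∈ C ∧ i (b x) = Ordinal.enumOrd S' (i a) := by
    intro a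
    have h1 : Ordinal.enumOrd S' (i a) ∈ S' := Ordinal.enumOrd_mem hS' _
    rcases h1 with h1 | h1
    · obtain ⟨β, hβ, hβ2⟩ := h1
      obtain ⟨x, hx, rfl⟩ := hβ
      exact ⟨x, hx, hβ2⟩
    · exact absurd h1 (not_le.mpr (hlt a))
  choose g hgC hgi using hmem
  refine ⟨g, fun a a' haa' => ?_⟩
  have h1 : Ordinal.enumOrd S' (i a) < Ordinal.enumOrd S' (i a') :=
    (Ordinal.enumOrd_strictMono hS') (hi_mono haa')
  rw [← hgi a, ← hgi a'] at h1
  exact hmono _ (hgC a) _ (hgC a') (hi_mono.lt_iff_lt.mp h1)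

/-- Dual form of the core lemma, producing a strictly decreasing sequence. -/
private lemma core_lemma_anti {L : Type*} [LinearOrder L] (C : Set L) (hC : ¬ C.Countable)
    (b : L → Omega1)
    (hfib : ∀ β : Omega1, {x | x ∈ C ∧ b x = β}.Countable)
    (hanti : ∀ x ∈ C, ∀ y ∈ C, b x < b y → y < x) :
    ∃ g : Omega1 → L, StrictAnti g := by
  have hC' : ¬ (OrderDual.ofDual ⁻¹' C : Set Lᵒᵈ).Countable := hC
  obtain ⟨g, hg⟩ := core_lemma (L := Lᵒᵈ) (OrderDual.ofDual ⁻¹' C) hC'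
    (fun x => b (OrderDual.ofDual x)) (fun β => hfib β)
    (fun x hx y hy hlt => hanti _ hx _ hy hlt)
  exact ⟨fun a => OrderDual.ofDual (g a), fun a a' h => hg h⟩

/-- An uncountable linear order that order-embeds into the
`ω₁`-lengthened rational line `U` contains a strictly monotone sequence of length `ω₁`:
some `f : ω₁ → L` is strictly increasing or strictly decreasing. -/
theorem exists_strictMono_or_strictAnti_omega1_seq
    {L : Type*} [LinearOrder L] [Uncountable L] (f : L ↪o Uline) :
    ∃ g : Omega1 → L, StrictMono g ∨ StrictAnti g := by
  classical
  have hne : Nonempty Omega1 := nonempty_Omega1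
  set A : Set L := {x | ∃ d : Dline, f x = toLex (Sum.inl (OrderDual.toDual d))} with hA
  set B : Set L := {x | ∃ q : ℚ, f x = toLex (Sum.inr (toLex (Sum.inl q)))} with hB
  set C : Set L := {x | ∃ d : Dline, f x = toLex (Sum.inr (toLex (Sum.inr d)))} with hC
  have hcover : ∀ x : L, x ∈ A ∨ x ∈ B ∨ x ∈ C := by
    intro x
    rcases hu : ofLex (f x) with d | y
    · exact Or.inl ⟨OrderDual.ofDual d, by rw [← toLex_ofLex (f x), hu]; rfl⟩
    · rcases hy : ofLex y with q | d
      · refine Or.inr (Or.inl ⟨q, ?_⟩)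
        rw [← toLex_ofLex (f x), hu, ← toLex_ofLex y, hy]
      · refine Or.inr (Or.inr ⟨d, ?_⟩)
        rw [← toLex_ofLex (f x), hu, ← toLex_ofLex y, hy]
  have hBc : B.Countable := by
    have hq : ∀ x : B, ∃ q : ℚ, f x = toLex (Sum.inr (toLex (Sum.inl q))) := fun x => x.2
    choose q hq using hq
    have hinj : Function.Injective q := by
      intro x y hxy
      have : f x = f y := by rw [hq x, hq y, hxy]
      exact Subtype.ext (f.injective this)
    exact Set.countable_coe_iff.mp hinj.countable
  have hmain : ¬ A.Countable ∨ ¬ C.Countable := by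
    by_contra h
    push_neg at h
    have : (Set.univ : Set L).Countable := by
      have hsub : (Set.univ : Set L) ⊆ A ∪ B ∪ C := fun x _ => by
        rcases hcover x with h | h | h
        · exact Or.inl (Or.inl h)
        · exact Or.inl (Or.inr h)
        · exact Or.inr h
      exact Set.Countable.mono hsub ((h.1.union hBc).union h.2)
    exact Set.not_countable_univ this
  rcases hmain with hAc | hCc
  · -- strictly decreasing case: uncountably many points in the reversed part
    set b : L → Omega1 := fun x =>
      if h : ∃ d : Dline, f x = toLex (Sum.inl (OrderDual.toDual d)) then (ofLex h.choose).1
      else Classical.arbitrary Omega1 with hb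
    have hbval : ∀ x (d : Dline), f x = toLex (Sum.inl (OrderDual.toDual d)) →
        b x = (ofLex d).1 := by
      intro x d hd
      have hex : ∃ d : Dline, f x = toLex (Sum.inl (OrderDual.toDual d)) := ⟨d, hd⟩
      have heq : hex.choose = d := by
        have h2 : toLex (Sum.inl (OrderDual.toDual hex.choose) :
            (OrderDual Dline) ⊕ (ℚ ⊕ₗ Dline)) = toLex (Sum.inl (OrderDual.toDual d)) :=
          hex.choose_spec.symm.trans hd
        simpa using h2
      simp only [hb]
      rw [dif_pos hex, heq]
    have hfib : ∀ β : Omega1, {x | x ∈ A ∧ b x = β}.Countable := by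
      intro β
      have hq : ∀ x : {x | x ∈ A ∧ b x = β},
          ∃ t : PUnit ⊕ₗ ℚ,
            f x.1 = toLex (Sum.inl (OrderDual.toDual (toLex (β, t)))) := by
        rintro ⟨x, ⟨d, hd⟩, hbx⟩
        refine ⟨(ofLex d).2, ?_⟩
        have h1 : b x = (ofLex d).1 := hbval x d hd
        have h2 : (ofLex d).1 = β := by rw [← h1, hbx]
        have h3 : toLex ((β : Omega1), (ofLex d).2) = d := by
          rw [← h2]; exact toLex_ofLex d
        rw [h3]; exact hd
      choose t ht using hq
      have hinj : Function.Injective t := by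
        intro x y hxy
        have : f x.1 = f y.1 := by rw [ht x, ht y, hxy]
        exact Subtype.ext (f.injective this)
      exact Set.countable_coe_iff.mp hinj.countable
    have hanti : ∀ x ∈ A, ∀ y ∈ A, b x < b y → y < x := by
      rintro x ⟨dx, hdx⟩ y ⟨dy, hdy⟩ hlt
      have hbx : b x = (ofLex dx).1 := hbval x dx hdx
      have hby : b y = (ofLex dy).1 := hbval y dy hdy
      have hdlt : dx < dy := by
        rw [← toLex_ofLex dx, ← toLex_ofLex dy]
        exact Prod.Lex.lt_iff.mpr (Or.inl (by rw [ofLex_toLex, ofLex_toLex, ← hbx, ← hby]; exact hlt))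
      have hdual : OrderDual.toDual dy < OrderDual.toDual dx := hdlt
      have hU : f y < f x := by
        rw [hdx, hdy]
        exact Sum.Lex.inl_lt_inl_iff.mpr hdual
      exact f.lt_iff_lt.mp hU
    obtain ⟨g, hg⟩ := core_lemma_anti A hAc b hfib hanti
    exact ⟨g, Or.inr hg⟩
  · -- strictly increasing case
    set b : L → Omega1 := fun x =>
      if h : ∃ d : Dline, f x = toLex (Sum.inr (toLex (Sum.inr d))) then (ofLex h.choose).1
      else Classical.arbitrary Omega1 with hb
    have hbval : ∀ x (d : Dline), f x = toLex (Sum.inr (toLex (Sum.inr d))) →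
        b x = (ofLex d).1 := by
      intro x d hd
      have hex : ∃ d : Dline, f x = toLex (Sum.inr (toLex (Sum.inr d))) := ⟨d, hd⟩
      have heq : hex.choose = d := by
        have h2 : toLex (Sum.inr (toLex (Sum.inr hex.choose)) :
            (OrderDual Dline) ⊕ (ℚ ⊕ₗ Dline)) = toLex (Sum.inr (toLex (Sum.inr d))) :=
          hex.choose_spec.symm.trans hd
        simpa using h2
      simp only [hb]
      rw [dif_pos hex, heq]
    have hfib : ∀ β : Omega1, {x | x ∈ C ∧ b x = β}.Countable := by
      intro β
      have hq : ∀ x : {x | x ∈ C ∧ b x = β},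
          ∃ t : PUnit ⊕ₗ ℚ, f x.1 = toLex (Sum.inr (toLex (Sum.inr (toLex (β, t))))) := by
        rintro ⟨x, ⟨d, hd⟩, hbx⟩
        refine ⟨(ofLex d).2, ?_⟩
        have h1 : b x = (ofLex d).1 := hbval x d hd
        have h2 : (ofLex d).1 = β := by rw [← h1, hbx]
        have h3 : toLex ((β : Omega1), (ofLex d).2) = d := by
          rw [← h2]; exact toLex_ofLex d
        rw [h3]; exact hd
      choose t ht using hq
      have hinj : Function.Injective t := by
        intro x y hxy
        have : f x.1 = f y.1 := by rw [ht x, ht y, hxy]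
        exact Subtype.ext (f.injective this)
      exact Set.countable_coe_iff.mp hinj.countable
    have hmono : ∀ x ∈ C, ∀ y ∈ C, b x < b y → x < y := by
      rintro x ⟨dx, hdx⟩ y ⟨dy, hdy⟩ hlt
      have hbx : b x = (ofLex dx).1 := hbval x dx hdx
      have hby : b y = (ofLex dy).1 := hbval y dy hdy
      have hdlt : dx < dy := by
        rw [← toLex_ofLex dx, ← toLex_ofLex dy]
        exact Prod.Lex.lt_iff.mpr (Or.inl (by rw [ofLex_toLex, ofLex_toLex, ← hbx, ← hby]; exact hlt))
      have hU : f x < f y := by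
        rw [hdx, hdy]
        exact Sum.Lex.inr_lt_inr_iff.mpr (Sum.Lex.inr_lt_inr_iff.mpr hdlt)
      exact f.lt_iff_lt.mp hU
    obtain ⟨g, hg⟩ := core_lemma C hCc b hfib hmono
    exact ⟨g, Or.inl hg⟩
end

section
/- Let L₁ be a linear order that condenses to 1 under the countable condensation, and let L₂ be a countable linear order. Then the lexicographic product Lex (L₁ × L₂) condenses to 1 under the countable condensation: for all x y : Lex (L₁ × L₂), the interval Set.uIcc x y is countable. In particular L₁ ·_ω L₂ ≅ 1. -/
/-- If `L₁` condenses to `1` under the countable condensation and `L₂`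
is a countable linear order, then the lexicographic product `Lex (L₁ × L₂)` condenses to
`1` under the countable condensation; in particular `L₁ ·_ω L₂ ≅ 1`. -/
theorem lex_prod_countable_condenses_to_one
    {L₁ L₂ : Type*} [LinearOrder L₁] [LinearOrder L₂] [Countable L₂]
    (h : ∀ x y : L₁, (Set.uIcc x y).Countable) :
    ∀ x y : Lex (L₁ × L₂), (Set.uIcc x y).Countable := by
  intro x y
  have key : Set.uIcc x y ⊆
      (fun p : L₁ × L₂ => toLex p) '' ((Set.uIcc (ofLex x).1 (ofLex y).1) ×ˢ Set.univ) := by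
    intro z hz
    refine ⟨ofLex z, ⟨?_, trivial⟩, rfl⟩
    rw [Set.mem_uIcc] at hz ⊢
    have h1 : ∀ a b : Lex (L₁ × L₂), a ≤ b → (ofLex a).1 ≤ (ofLex b).1 := by
      intro a b hab
      rcases Prod.Lex.le_iff.1 hab with h' | ⟨h', _⟩
      · exact h'.le
      · exact h'.le
    rcases hz with ⟨hx, hy⟩ | ⟨hy, hx⟩
    · exact Or.inl ⟨h1 _ _ hx, h1 _ _ hy⟩
    · exact Or.inr ⟨h1 _ _ hy, h1 _ _ hx⟩
  exact Set.Countable.mono key (((h _ _).prod Set.countable_univ).image _)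
end
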